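/- Let (a_k)_{k∈ℕ} be a sequence of complex numbers such that the series ∑_{k=0}^∞ a_k converges in ℂ and ∑_{k=0}^∞ |a_k|² < ∞. Let Ω := {z ∈ ℂ : a_k·z ≠ 1 for all k ∈ ℕ}. Then: (a) for every z ∈ Ω the series ∑_{k=0}^∞ a_k/(1 − a_k·z) converges in ℂ; (b) the set {1/a_k : k ∈ ℕ, a_k ≠ 0} is closed and discrete in ℂ (so Ω is open); and (c) the function f : Ω → ℂ defined by f(z) = ∑_{k=0}^∞ a_k/(1 − a_k·z) is complex-differentiable at every point of Ω. -/

import Mathlib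

open Filter Topology Metric

lemma aux_tendsto_zero (a : ℕ → ℂ) {S : ℂ}
    (h : Tendsto (fun N => ∑ k ∈ Finset.range N, a k) atTop (𝓝 S)) :
    Tendsto a atTop (𝓝 0) := by
  have h1 : Tendsto (fun N => ∑ k ∈ Finset.range (N + 1), a k) atTop (𝓝 S) :=
    h.comp (tendsto_add_atTop_nat 1)
  have h2 := h1.sub h
  simpa [Finset.sum_range_succ] using h2

lemma aux_bound {w z : ℂ} {R : ℝ} (hz : ‖z‖ ≤ R) (hw : ‖w‖ ≤ 1 / (2 * (R + 1))) :
    ‖w ^ 2 * z / (1 - w * z)‖ ≤ 2 * R * ‖w‖ ^ 2 := by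
  have hR : 0 ≤ R := le_trans (norm_nonneg z) hz
  have hwz : ‖w * z‖ ≤ 1 / 2 := by
    rw [norm_mul]
    have h1 : ‖w‖ * ‖z‖ ≤ (1 / (2 * (R + 1))) * R :=
      mul_le_mul hw hz (norm_nonneg z) (by positivity)
    have h2 : (1 / (2 * (R + 1))) * R ≤ 1 / 2 := by
      rw [div_mul_eq_mul_div, div_le_div_iff₀ (by positivity) (by norm_num)]
      nlinarith
    linarith
  have hden : (1 : ℝ) / 2 ≤ ‖1 - w * z‖ := by
    have := norm_sub_norm_le (1 : ℂ) (w * z)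
    simp only [norm_one] at this
    linarith
  rw [norm_div, norm_mul, norm_pow]
  have hnum : ‖w‖ ^ 2 * ‖z‖ ≤ ‖w‖ ^ 2 * R := by nlinarith [sq_nonneg ‖w‖]
  calc ‖w‖ ^ 2 * ‖z‖ / ‖1 - w * z‖ ≤ ‖w‖ ^ 2 * R / (1 / 2) := by
        apply div_le_div₀ (by positivity) hnum (by norm_num) hden
    _ = 2 * R * ‖w‖ ^ 2 := by ring

-- isolation of pole set
lemma aux_isolated (a : ℕ → ℂ) (h0 : Tendsto a atTop (𝓝 0)) (w : ℂ) :
    ∃ ε > 0, ∀ x ∈ Metric.ball w ε, (∃ k, a k ≠ 0 ∧ x = (a k)⁻¹) → x = w := by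
  set R : ℝ := ‖w‖ + 1 with hR
  have hRpos : (0 : ℝ) < R := by positivity
  obtain ⟨K, hK⟩ : ∃ K, ∀ k ≥ K, ‖a k‖ < 1 / R := by
    have := (h0.eventually (Metric.ball_mem_nhds (0 : ℂ) (by positivity : (0:ℝ) < 1 / R)))
    simpa [Metric.mem_ball, dist_eq_norm, eventually_atTop] using this
  set C : Set ℂ := ((Finset.range K).image fun k => (a k)⁻¹ : Finset ℂ) \ {w} with hC
  have hCclosed : IsClosed C :=
    (Set.Finite.subset (Finset.finite_toSet _) Set.diff_subset).isClosed
  have hwC : w ∉ C := by simp [hC]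
  obtain ⟨ε₁, hε₁, hball⟩ := Metric.isOpen_iff.1 hCclosed.isOpen_compl w hwC
  refine ⟨min ε₁ 1, by positivity, ?_⟩
  rintro x hx ⟨k, hk, rfl⟩
  have hx1 : (a k)⁻¹ ∈ Metric.ball w ε₁ := Metric.ball_subset_ball (min_le_left _ _) hx
  have hx2 : (a k)⁻¹ ∈ Metric.ball w 1 := Metric.ball_subset_ball (min_le_right _ _) hx
  rcases lt_or_ge k K with hkK | hkK
  · -- k < K : use the finite-set isolation
    have := hball hx1
    simp only [Set.mem_compl_iff, hC, Set.mem_diff, Set.mem_singleton_iff, not_and, not_not,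
      Finset.coe_image, Set.mem_image, Finset.mem_coe, Finset.mem_range] at this
    exact this ⟨k, hkK, rfl⟩
  · -- k ≥ K : contradiction from norms
    exfalso
    have h1 : ‖a k‖ < 1 / R := hK k hkK
    have h2 : R < ‖(a k)⁻¹‖ := by
      have hpos : 0 < ‖a k‖ := norm_pos_iff.2 hk
      rw [norm_inv, lt_inv_comm₀ hRpos hpos, ← one_div]
      exact h1
    have h3 : ‖(a k)⁻¹‖ < ‖w‖ + 1 := by
      have := mem_ball_iff_norm.1 hx2
      calc ‖(a k)⁻¹‖ = ‖w + ((a k)⁻¹ - w)‖ := by ring_nf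
        _ ≤ ‖w‖ + ‖(a k)⁻¹ - w‖ := norm_add_le _ _
        _ < ‖w‖ + 1 := by linarith
    rw [hR] at h2; linarith

theorem stmt_0 (a : ℕ → ℂ)
    (hconv : ∃ S : ℂ, Tendsto (fun N => ∑ k ∈ Finset.range N, a k) atTop (𝓝 S))
    (hsq : Summable fun k => ‖a k‖ ^ 2) :
    (∀ z : ℂ, (∀ k, a k * z ≠ 1) →
      ∃ L : ℂ, Tendsto (fun N => ∑ k ∈ Finset.range N, a k / (1 - a k * z)) atTop (𝓝 L)) ∧
    (IsClosed {w : ℂ | ∃ k, a k ≠ 0 ∧ w = (a k)⁻¹} ∧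
      DiscreteTopology {w : ℂ | ∃ k, a k ≠ 0 ∧ w = (a k)⁻¹} ∧
      IsOpen {z : ℂ | ∀ k, a k * z ≠ 1}) ∧
    (∃ f : ℂ → ℂ,
      (∀ z : ℂ, (∀ k, a k * z ≠ 1) →
        Tendsto (fun N => ∑ k ∈ Finset.range N, a k / (1 - a k * z)) atTop (𝓝 (f z))) ∧
      (∀ z : ℂ, (∀ k, a k * z ≠ 1) → DifferentiableAt ℂ f z)) := by
  obtain ⟨S, hS⟩ := hconv
  have h0 : Tendsto a atTop (𝓝 0) := aux_tendsto_zero a hS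
  set b : ℕ → ℂ → ℂ := fun k z => a k ^ 2 * z / (1 - a k * z) with hb
  -- pointwise summability of the correction series
  have hsum : ∀ z : ℂ, Summable fun k => b k z := by
    intro z
    apply Summable.of_norm_bounded_eventually_nat (g := fun k => 2 * ‖z‖ * ‖a k‖ ^ 2)
      ((hsq.mul_left _))
    have hev : ∀ᶠ k in atTop, ‖a k‖ ≤ 1 / (2 * (‖z‖ + 1)) := by
      have := h0.eventually (Metric.closedBall_mem_nhds (0 : ℂ)
        (by positivity : (0:ℝ) < 1 / (2 * (‖z‖ + 1))))
      simpa [Metric.mem_closedBall, dist_eq_norm] using this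
    filter_upwards [hev] with k hk
    exact aux_bound le_rfl hk
  -- decomposition of partial sums
  have hdecomp : ∀ z : ℂ, (∀ k, a k * z ≠ 1) → ∀ N,
      ∑ k ∈ Finset.range N, a k / (1 - a k * z)
        = (∑ k ∈ Finset.range N, a k) + ∑ k ∈ Finset.range N, b k z := by
    intro z hz N
    rw [← Finset.sum_add_distrib]
    refine Finset.sum_congr rfl fun k _ => ?_
    have hne : (1 : ℂ) - a k * z ≠ 0 := sub_ne_zero.2 (Ne.symm (hz k))
    simp only [hb]; field_simp
    ring
  set f : ℂ → ℂ := fun z => S + ∑' k, b k z with hf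
  have htendsto : ∀ z : ℂ, (∀ k, a k * z ≠ 1) →
      Tendsto (fun N => ∑ k ∈ Finset.range N, a k / (1 - a k * z)) atTop (𝓝 (f z)) := by
    intro z hz
    have h1 : Tendsto (fun N => ∑ k ∈ Finset.range N, b k z) atTop (𝓝 (∑' k, b k z)) :=
      (hsum z).hasSum.tendsto_sum_nat
    have := hS.add h1
    simp only [hdecomp z hz]
    exact this
  -- the pole set, isolation, openness
  set P : Set ℂ := {w : ℂ | ∃ k, a k ≠ 0 ∧ w = (a k)⁻¹} with hP
  have hiso := aux_isolated a h0
  have hPclosed : IsClosed P := by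
    rw [← isOpen_compl_iff]
    rw [Metric.isOpen_iff]
    intro w hw
    obtain ⟨ε, hε, h⟩ := hiso w
    exact ⟨ε, hε, fun x hx hxP => hw (h x hx hxP ▸ hxP)⟩
  have hOmega : {z : ℂ | ∀ k, a k * z ≠ 1} = Pᶜ := by
    ext z
    simp only [Set.mem_setOf_eq, Set.mem_compl_iff, hP, not_exists]
    constructor
    · rintro h k ⟨hk, rfl⟩
      exact h k (mul_inv_cancel₀ hk)
    · intro h k hk
      have hk0 : a k ≠ 0 := by rintro h0'; rw [h0'] at hk; simp at hk
      exact h k ⟨hk0, (inv_eq_of_mul_eq_one_right hk).symm⟩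
  have hOpen : IsOpen {z : ℂ | ∀ k, a k * z ≠ 1} := hOmega ▸ hPclosed.isOpen_compl
  have hDisc : DiscreteTopology P := by
    rw [discreteTopology_subtype_iff]
    intro w hw
    rw [inf_principal_eq_bot]
    obtain ⟨ε, hε, h⟩ := hiso w
    rw [mem_nhdsWithin]
    exact ⟨Metric.ball w ε, Metric.isOpen_ball, Metric.mem_ball_self hε,
      fun x ⟨hx1, hx2⟩ hxP => hx2 (h x hx1 hxP)⟩
  -- differentiability
  have hdiff : ∀ z : ℂ, (∀ k, a k * z ≠ 1) → DifferentiableAt ℂ f z := by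
    intro z₀ hz₀
    obtain ⟨r, hr, hball⟩ := Metric.isOpen_iff.1 hOpen z₀ hz₀
    set s : Set ℂ := Metric.closedBall z₀ (r / 2) with hs
    have hsub : s ⊆ {z : ℂ | ∀ k, a k * z ≠ 1} := fun x hx =>
      hball (lt_of_le_of_lt (Metric.mem_closedBall.1 hx) (by linarith))
    set R : ℝ := ‖z₀‖ + r with hRdef
    have hRpos : 0 < R := by positivity
    have hzR : ∀ x ∈ s, ‖x‖ ≤ R := by
      intro x hx
      have h1 : dist x z₀ ≤ r / 2 := Metric.mem_closedBall.1 hx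
      calc ‖x‖ = ‖z₀ + (x - z₀)‖ := by ring_nf
        _ ≤ ‖z₀‖ + ‖x - z₀‖ := norm_add_le _ _
        _ ≤ ‖z₀‖ + r := by rw [← dist_eq_norm]; linarith
    obtain ⟨K, hK⟩ : ∃ K, ∀ k ≥ K, ‖a k‖ ≤ 1 / (2 * (R + 1)) := by
      have := h0.eventually (Metric.closedBall_mem_nhds (0 : ℂ)
        (by positivity : (0:ℝ) < 1 / (2 * (R + 1))))
      simpa [Metric.mem_closedBall, dist_eq_norm, eventually_atTop] using this
    -- continuity bounds for the first K terms
    have hcont : ∀ k, ∃ C : ℝ, ∀ x ∈ s, ‖b k x‖ ≤ C := by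
      intro k
      have hc : ContinuousOn (b k) s := by
        apply ContinuousOn.div
        · fun_prop
        · fun_prop
        · intro x hx
          exact sub_ne_zero.2 (Ne.symm (hsub hx k))
      exact (isCompact_closedBall z₀ (r / 2)).exists_bound_of_continuousOn hc
    choose C hCspec using hcont
    set u : ℕ → ℝ := fun k => if k < K then C k else 2 * R * ‖a k‖ ^ 2 with hu
    have husum : Summable u := by
      apply Summable.of_norm_bounded_eventually_nat (g := fun k => 2 * R * ‖a k‖ ^ 2)
        (hsq.mul_left _)
      filter_upwards [eventually_ge_atTop K] with k hk
      rw [hu]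
      simp only []
      rw [if_neg (Nat.not_lt.2 hk), Real.norm_eq_abs,
        abs_of_nonneg (mul_nonneg (by linarith) (sq_nonneg _))]
    have hbound : ∀ k x, x ∈ s → ‖b k x‖ ≤ u k := by
      intro k x hx
      rw [hu]
      by_cases hkK : k < K
      · simp only [if_pos hkK]; exact hCspec k x hx
      · simp only [if_neg hkK]
        exact aux_bound (hzR x hx) (hK k (Nat.le_of_not_lt hkK))
    have huniform : TendstoUniformlyOn (fun N x => ∑ k ∈ Finset.range N, b k x)
        (fun x => ∑' k, b k x) atTop s := tendstoUniformlyOn_tsum_nat husum hbound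
    have hlocal : TendstoLocallyUniformlyOn (fun N x => ∑ k ∈ Finset.range N, b k x)
        (fun x => ∑' k, b k x) atTop (Metric.ball z₀ (r / 2)) :=
      (huniform.mono Metric.ball_subset_closedBall).tendstoLocallyUniformlyOn
    have hdiffN : ∀ N : ℕ, DifferentiableOn ℂ (fun x => ∑ k ∈ Finset.range N, b k x)
        (Metric.ball z₀ (r / 2)) := by
      intro N
      apply DifferentiableOn.fun_sum
      intro k _
      apply DifferentiableOn.div
      · fun_prop
      · fun_prop
      · intro x hx
        exact sub_ne_zero.2 (Ne.symm (hsub (Metric.ball_subset_closedBall hx) k))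
    have hg : DifferentiableOn ℂ (fun x => ∑' k, b k x) (Metric.ball z₀ (r / 2)) :=
      hlocal.differentiableOn (Eventually.of_forall hdiffN) Metric.isOpen_ball
    have hgat : DifferentiableAt ℂ (fun x => ∑' k, b k x) z₀ :=
      hg.differentiableAt (Metric.isOpen_ball.mem_nhds (Metric.mem_ball_self (by linarith)))
    exact (differentiableAt_const S).add hgat
  exact ⟨fun z hz => ⟨f z, htendsto z hz⟩, ⟨hPclosed, hDisc, hOpen⟩,
    ⟨f, htendsto, hdiff⟩⟩
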